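/- Let ψ₀ solve ψ₀'' = ψ₀((−1+h⁰t)²−1) on [0,∞) with ψ₀(0)=1, ψ₀'(0)=0, and suppose 0<ψ₀≤1, ψ₀'≤0, with ψ₀ and ψ₀' decaying exponentially. Define H(t) = ∫_t^∞ ψ₀(s)²(−1+h⁰s) ds and q = ψ₀'/ψ₀. Then H(t) = −ψ₀(t)² q'(t) / (2h⁰) for all t ≥ 0. -/

import Mathlib

open Set MeasureTheory Filter Topology

set_option maxHeartbeats 1600000 in
/-- The tail integral H(t) = ∫_t^∞ ψ₀²(-1+h⁰s) ds equals -ψ₀(t)²q'(t)/(2h⁰),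
where q = ψ₀'/ψ₀. -/
theorem stmt_14 (h0 : ℝ) (hh0 : 0 < h0) (ψ : ℝ → ℝ)
    (hinit : ψ 0 = 1) (hinit' : deriv ψ 0 = 0)
    (hode : ∀ t ∈ Ici (0:ℝ),
      HasDerivAt (deriv ψ) (((-1 + h0 * t)^2 - 1) * ψ t) t)
    (hpos : ∀ t ∈ Ici (0:ℝ), 0 < ψ t ∧ ψ t ≤ 1)
    (hdec : ∀ t ∈ Ici (0:ℝ), deriv ψ t ≤ 0)
    (hexp : ∃ C c : ℝ, 0 < C ∧ 0 < c ∧ ∀ t ∈ Ici (0:ℝ),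
      |ψ t| ≤ C * Real.exp (-c * t) ∧ |deriv ψ t| ≤ C * Real.exp (-c * t)) :
    ∀ t ∈ Ici (0:ℝ),
      (∫ s in Ioi t, (ψ s)^2 * (-1 + h0 * s))
        = -(ψ t)^2 * deriv (fun u => deriv ψ u / ψ u) t / (2 * h0) := by
  obtain ⟨C, c, hC, hc, hCc⟩ := hexp
  set g : ℝ → ℝ := deriv ψ with hgdef
  have hψpos : ∀ t : ℝ, 0 ≤ t → 0 < ψ t := fun t ht => (hpos t ht).1
  have hψle : ∀ t : ℝ, 0 ≤ t → ψ t ≤ 1 := fun t ht => (hpos t ht).2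
  have hg' : ∀ t : ℝ, 0 ≤ t → HasDerivAt g (((-1 + h0 * t)^2 - 1) * ψ t) t :=
    fun t ht => hode t ht
  have hg0 : g 0 = 0 := hinit'
  -- Lemma A : g t < 0 for t > 0
  have hgneg : ∀ t : ℝ, 0 < t → g t < 0 := by
    intro t ht
    rcases le_or_gt t (2 / h0) with hle | hgt
    · have hanti : StrictAntiOn g (Icc 0 (2 / h0)) := by
        apply strictAntiOn_of_deriv_neg (convex_Icc _ _)
        · exact fun x hx => ((hg' x hx.1).differentiableAt.continuousAt).continuousWithinAt
        · intro x hx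
          rw [interior_Icc] at hx
          rw [(hg' x hx.1.le).deriv]
          have h1 : h0 * x < 2 := by
            have := hx.2
            rw [lt_div_iff₀ hh0] at this
            linarith
          have h2 := hψpos x hx.1.le
          have h3 : ((-1 + h0 * x)^2 - 1) * ψ x = -(h0 * x * (2 - h0 * x) * ψ x) := by ring
          rw [h3]
          have h4 : 0 < h0 * x * (2 - h0 * x) * ψ x :=
            mul_pos (mul_pos (mul_pos hh0 hx.1) (by linarith)) h2
          linarith
      have h02 : (0:ℝ) < 2 / h0 := by positivity
      have := hanti ⟨le_refl 0, h02.le⟩ ⟨ht.le, hle⟩ ht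
      rwa [hg0] at this
    · have hle0 : g t ≤ 0 := hdec t ht.le
      rcases hle0.lt_or_eq with h | h
      · exact h
      · exfalso
        have hp : 0 < ((-1 + h0 * t)^2 - 1) * ψ t := by
          have h2 : 2 < h0 * t := by
            rw [div_lt_iff₀ hh0] at hgt
            linarith
          have h3 : ((-1 + h0 * t)^2 - 1) * ψ t = h0 * t * (h0 * t - 2) * ψ t := by ring
          rw [h3]
          exact mul_pos (mul_pos (mul_pos hh0 ht) (by linarith)) (hψpos t ht.le)
        have hslope := hasDerivAt_iff_tendsto_slope.1 (hg' t ht.le)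
        have hev : {x | slope g t x ∈ Ioi 0} ∈ 𝓝[≠] t := hslope (Ioi_mem_nhds hp)
        have hev' : ∀ᶠ x in 𝓝[>] t, 0 < slope g t x :=
          nhdsWithin_mono t (fun s hs => (ne_of_gt hs : s ≠ t)) hev
        obtain ⟨s, hs1, hs2⟩ := (hev'.and eventually_mem_nhdsWithin).exists
        have hst : t < s := hs2
        have hsl : 0 < (g s - g t) / (s - t) := by
          simpa [slope_def_field] using hs1
        have hgs : 0 < g s := by
          by_contra hcon
          push_neg at hcon
          have : (g s - g t) / (s - t) ≤ 0 :=
            div_nonpos_iff.2 (Or.inr ⟨by rw [h] at *; linarith, (sub_pos.2 hst).le⟩)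
          linarith
        exact absurd (hdec s (by linarith : (0:ℝ) ≤ s)) (by linarith)
  -- Lemma B : ψ has derivative g t at t > 0
  have hψd : ∀ t : ℝ, 0 < t → HasDerivAt ψ (g t) t := by
    intro t ht
    by_cases hdiff : DifferentiableAt ℝ ψ t
    · exact hdiff.hasDerivAt
    · exact absurd (deriv_zero_of_not_differentiableAt hdiff) (ne_of_lt (hgneg t ht))
  have hψcont : ∀ t : ℝ, 0 < t → ContinuousAt ψ t := fun t ht => (hψd t ht).continuousAt
  -- ψ 1 ≤ ψ s for s ∈ (0,1]
  have hψ1 : ∀ s : ℝ, 0 < s → s ≤ 1 → ψ 1 ≤ ψ s := by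
    intro s hs hs1
    have hanti : AntitoneOn ψ (Icc s 1) := by
      apply antitoneOn_of_deriv_nonpos (convex_Icc _ _)
      · exact fun x hx => (hψcont x (hs.trans_le hx.1)).continuousWithinAt
      · intro x hx
        rw [interior_Icc] at hx
        exact (hψd x (hs.trans hx.1)).differentiableAt.differentiableWithinAt
      · intro x hx
        rw [interior_Icc] at hx
        exact hdec x (by linarith [hx.1] : (0:ℝ) ≤ x)
    exact hanti ⟨le_refl s, hs1⟩ ⟨hs1, le_refl 1⟩ hs1
  -- exponential bound helper
  have hKey : ∀ s : ℝ, 0 ≤ s → s * Real.exp (-c * s) ≤ 2 / c * Real.exp (-(c/2) * s) := by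
    intro s hs
    have h1 : c / 2 * s ≤ Real.exp (c / 2 * s) := by
      have := Real.add_one_le_exp (c / 2 * s); linarith
    have h2 : s ≤ 2 / c * Real.exp (c / 2 * s) := by
      have hc' : (0:ℝ) < 2 / c := by positivity
      calc s = 2 / c * (c / 2 * s) := by field_simp
        _ ≤ 2 / c * Real.exp (c / 2 * s) := by
            exact mul_le_mul_of_nonneg_left h1 hc'.le
    calc s * Real.exp (-c * s) ≤ 2 / c * Real.exp (c / 2 * s) * Real.exp (-c * s) := by
          exact mul_le_mul_of_nonneg_right h2 (Real.exp_pos _).le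
      _ = 2 / c * Real.exp (-(c/2) * s) := by
          rw [mul_assoc, ← Real.exp_add]
          congr 1
          ring
  have hexpmono : ∀ s : ℝ, 0 ≤ s → Real.exp (-c * s) ≤ Real.exp (-(c/2) * s) := by
    intro s hs
    apply Real.exp_le_exp.2
    nlinarith
  -- bound on the integrand
  have hfbound : ∀ s : ℝ, 0 ≤ s →
      |(ψ s)^2 * (-1 + h0 * s)| ≤ C * (1 + 2 * h0 / c) * Real.exp (-(c/2) * s) := by
    intro s hs
    obtain ⟨hb1, _⟩ := hCc s hs
    have hψs := hψpos s hs
    have hψs1 := hψle s hs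
    have h1 : (ψ s)^2 ≤ C * Real.exp (-c * s) := by
      have : (ψ s)^2 ≤ ψ s := by nlinarith
      have h2 : ψ s ≤ C * Real.exp (-c * s) := (abs_of_pos hψs) ▸ hb1
      linarith
    have h2 : |(-1 + h0 * s)| ≤ 1 + h0 * s := by
      rw [abs_le]
      constructor <;> nlinarith [mul_nonneg hh0.le hs]
    have h3 : |(ψ s)^2 * (-1 + h0 * s)| ≤ (C * Real.exp (-c * s)) * (1 + h0 * s) := by
      rw [abs_mul, abs_of_nonneg (sq_nonneg _)]
      exact mul_le_mul h1 h2 (abs_nonneg _) (by positivity)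
    calc |(ψ s)^2 * (-1 + h0 * s)| ≤ C * Real.exp (-c * s) + C * h0 * (s * Real.exp (-c * s)) := by
          nlinarith [h3]
      _ ≤ C * Real.exp (-(c/2) * s) + C * h0 * (2 / c * Real.exp (-(c/2) * s)) := by
          have := hexpmono s hs
          have := hKey s hs
          have hCh0 : (0:ℝ) ≤ C * h0 := by positivity
          nlinarith
      _ = C * (1 + 2 * h0 / c) * Real.exp (-(c/2) * s) := by ring
  -- continuity of the integrand on (0,∞)
  have hfcont : ∀ s : ℝ, 0 < s → ContinuousAt (fun u => (ψ u)^2 * (-1 + h0 * u)) s := by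
    intro s hs
    exact ((hψcont s hs).pow 2).mul
      ((continuous_const.add (continuous_const.mul continuous_id)).continuousAt)
  -- integrability
  have hfint : ∀ t : ℝ, 0 ≤ t → IntegrableOn (fun s => (ψ s)^2 * (-1 + h0 * s)) (Ioi t) := by
    intro t ht
    have hmeas : AEStronglyMeasurable (fun s => (ψ s)^2 * (-1 + h0 * s))
        (volume.restrict (Ioi t)) := by
      apply ContinuousOn.aestronglyMeasurable _ measurableSet_Ioi
      exact fun s hs => (hfcont s (ht.trans_lt hs)).continuousWithinAt
    apply Integrable.mono'
      ((exp_neg_integrableOn_Ioi t (half_pos hc)).const_mul (C * (1 + 2 * h0 / c))) hmeas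
    rw [ae_restrict_iff' measurableSet_Ioi]
    filter_upwards with s hs
    have := hfbound s (ht.trans hs.le)
    simpa only [Real.norm_eq_abs] using this
  -- basic exponential limits
  have htend : ∀ K b : ℝ, 0 < b → Tendsto (fun u => K * Real.exp (-b * u)) atTop (𝓝 0) := by
    intro K b hb
    have h1 : Tendsto (fun u : ℝ => -b * u) atTop atBot := by
      have := (tendsto_id (α := ℝ)).const_mul_atTop hb
      have h2 : Tendsto (fun u : ℝ => -(b * u)) atTop atBot := tendsto_neg_atBot_iff.2 this
      simpa [neg_mul] using h2
    have h3 : Tendsto (fun u : ℝ => Real.exp (-b * u)) atTop (𝓝 0) :=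
      Real.tendsto_exp_atBot.comp h1
    simpa using h3.const_mul K
  have hgtend : Tendsto g atTop (𝓝 0) := by
    apply squeeze_zero_norm' _ (htend C c hc)
    filter_upwards [eventually_ge_atTop (0:ℝ)] with u hu
    simpa [Real.norm_eq_abs] using (hCc u hu).2
  have hψtend : Tendsto ψ atTop (𝓝 0) := by
    apply squeeze_zero_norm' _ (htend C c hc)
    filter_upwards [eventually_ge_atTop (0:ℝ)] with u hu
    simpa [Real.norm_eq_abs] using (hCc u hu).1
  have hlintend : Tendsto (fun u => (-1 + h0 * u) * ψ u) atTop (𝓝 0) := by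
    have hsum : Tendsto (fun u => C * Real.exp (-c * u)
        + C * h0 * (2 / c) * Real.exp (-(c/2) * u)) atTop (𝓝 0) := by
      have := (htend C c hc).add (htend (C * h0 * (2 / c)) (c/2) (half_pos hc))
      simpa using this
    apply squeeze_zero_norm' _ hsum
    filter_upwards [eventually_ge_atTop (0:ℝ)] with u hu
    have hb1 := (hCc u hu).1
    have habs : |ψ u| = ψ u := abs_of_pos (hψpos u hu)
    have h2 : |(-1 + h0 * u)| ≤ 1 + h0 * u := by
      rw [abs_le]
      constructor <;> nlinarith [mul_nonneg hh0.le hu]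
    have h3 : ‖(-1 + h0 * u) * ψ u‖ ≤ (1 + h0 * u) * (C * Real.exp (-c * u)) := by
      rw [Real.norm_eq_abs, abs_mul]
      exact mul_le_mul h2 (habs ▸ hb1) (abs_nonneg _) (by nlinarith [mul_nonneg hh0.le hu])
    have h4 := hKey u hu
    have h5 := hexpmono u hu
    have hCh0 : (0:ℝ) ≤ C * h0 := by positivity
    nlinarith
  -- the antiderivative F
  set F : ℝ → ℝ := fun u => ((g u)^2 - ((-1 + h0 * u)^2 - 1) * (ψ u)^2) / (2 * h0) with hFdef
  have hFtend : Tendsto F atTop (𝓝 0) := by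
    have h1 : Tendsto (fun u => (g u * g u - (((-1 + h0 * u) * ψ u) * ((-1 + h0 * u) * ψ u)
        - ψ u * ψ u)) / (2 * h0)) atTop (𝓝 ((0 * 0 - (0 * 0 - 0 * 0)) / (2 * h0))) :=
      ((hgtend.mul hgtend).sub ((hlintend.mul hlintend).sub (hψtend.mul hψtend))).div_const _
    rw [show (0 * 0 - (0 * 0 - 0 * 0 : ℝ)) / (2 * h0) = 0 by norm_num] at h1
    exact h1.congr (fun u => by rw [hFdef]; ring)
  have hFderiv : ∀ u : ℝ, 0 < u → HasDerivAt F (-((ψ u)^2 * (-1 + h0 * u))) u := by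
    intro u hu
    have h1 := hψd u hu
    have h2 := hg' u hu.le
    have hq : HasDerivAt (fun v => (-1 + h0 * v)^2 - 1) (2 * (-1 + h0 * u) * h0) u := by
      have hlin : HasDerivAt (fun v : ℝ => -1 + h0 * v) h0 u := by
        simpa using ((hasDerivAt_id u).const_mul h0).const_add (-1)
      simpa using (hlin.pow 2).sub_const 1
    have hg2 : HasDerivAt (fun v => (g v)^2)
        ((2:ℕ) * g u ^ 1 * (((-1 + h0 * u)^2 - 1) * ψ u)) u := h2.pow 2
    have hψ2 : HasDerivAt (fun v => (ψ v)^2) ((2:ℕ) * ψ u ^ 1 * g u) u := h1.pow 2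
    have h3 := (hg2.sub (hq.mul hψ2)).div_const (2 * h0)
    refine h3.congr_deriv ?_
    rw [div_eq_iff (by positivity : (2:ℝ) * h0 ≠ 0)]; push_cast
    ring
  have hFcont : ∀ u : ℝ, 0 < u → ContinuousAt F u :=
    fun u hu => (hFderiv u hu).continuousAt
  -- FTC on (t, ∞) for t > 0
  have hkey : ∀ t : ℝ, 0 < t → (∫ s in Ioi t, (ψ s)^2 * (-1 + h0 * s)) = F t := by
    intro t ht
    have hint := (hfint t ht.le).neg
    have h1 : ∫ s in Ioi t, -((ψ s)^2 * (-1 + h0 * s)) = 0 - F t := by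
      apply integral_Ioi_of_hasDerivAt_of_tendsto
        (hFcont t ht).continuousWithinAt
        (fun x hx => hFderiv x (ht.trans hx)) hint hFtend
    rw [integral_neg] at h1
    linarith [h1]
  -- main goal
  intro t ht
  rcases (show (0:ℝ) ≤ t from ht).eq_or_lt with rfl | htpos
  · -- case t = 0
    have hderiv0 : deriv (fun u => g u / ψ u) 0 = 0 := by
      by_cases hd : DifferentiableAt ℝ (fun u => g u / ψ u) 0
      · have hs1 := hasDerivAt_iff_tendsto_slope.1 hd.hasDerivAt
        have hs2 : Tendsto (slope (fun u => g u / ψ u) 0) (𝓝[>] 0)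
            (𝓝 (deriv (fun u => g u / ψ u) 0)) :=
          hs1.mono_left (nhdsWithin_mono 0 (fun s hs => (ne_of_gt hs : s ≠ 0)))
        have hg'0 : HasDerivAt g 0 0 := by
          have := hg' 0 le_rfl
          norm_num [hinit] at this
          exact this
        have hgsl : Tendsto (slope g 0) (𝓝[>] 0) (𝓝 0) :=
          (hasDerivAt_iff_tendsto_slope.1 hg'0).mono_left
            (nhdsWithin_mono 0 (fun s hs => (ne_of_gt hs : s ≠ 0)))
        have hψ1pos : 0 < ψ 1 := hψpos 1 one_pos.le
        have habs : Tendsto (fun s => |slope g 0 s| / ψ 1) (𝓝[>] 0) (𝓝 0) := by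
          have := (hgsl.abs).div_const (ψ 1)
          simpa using this
        have hzero : Tendsto (slope (fun u => g u / ψ u) 0) (𝓝[>] 0) (𝓝 0) := by
          apply squeeze_zero_norm' _ habs
          filter_upwards [Ioc_mem_nhdsGT one_pos] with s hs
          have hs0 : 0 < s := hs.1
          have hψs := hψpos s hs0.le
          have hψs1 : ψ 1 ≤ ψ s := hψ1 s hs0 hs.2
          have hval : slope (fun u => g u / ψ u) 0 s = g s / (ψ s * s) := by
            rw [slope_def_field]
            simp [hg0, hinit, div_div]
          calc ‖slope (fun u => g u / ψ u) 0 s‖ = |g s| / (ψ s * s) := by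
                rw [hval, Real.norm_eq_abs, abs_div, abs_of_pos (mul_pos hψs hs0)]
            _ ≤ |g s| / (s * ψ 1) := by
                apply div_le_div_of_nonneg_left (abs_nonneg _) (mul_pos hs0 hψ1pos)
                nlinarith
            _ = |slope g 0 s| / ψ 1 := by
                rw [slope_def_field, hg0, sub_zero, sub_zero, abs_div, abs_of_pos hs0, div_div]
        exact tendsto_nhds_unique hs2 hzero
      · exact deriv_zero_of_not_differentiableAt hd
    rw [hderiv0, mul_zero, zero_div]
    -- show the tail integral from 0 vanishes
    have hsplit : ∀ ε : ℝ, 0 < ε → (∫ s in Ioi (0:ℝ), (ψ s)^2 * (-1 + h0 * s))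
        = (∫ s in Ioc (0:ℝ) ε, (ψ s)^2 * (-1 + h0 * s)) + F ε := by
      intro ε hε
      rw [← hkey ε hε,
        ← setIntegral_union (Ioc_disjoint_Ioi le_rfl) measurableSet_Ioi
          ((hfint 0 le_rfl).mono_set Ioc_subset_Ioi_self) (hfint ε hε.le),
        Ioc_union_Ioi_eq_Ioi hε.le]
    have hF0 : Tendsto F (𝓝[>] 0) (𝓝 0) := by
      have hgc : ContinuousAt g 0 := (hg' 0 le_rfl).differentiableAt.continuousAt
      have hcont2 : ContinuousAt (fun ε => ((g ε)^2 + |(-1 + h0 * ε)^2 - 1|) / (2 * h0)) 0 := by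
        apply ContinuousAt.div_const
        exact (hgc.pow 2).add
          ((((continuous_const.add (continuous_const.mul continuous_id)).pow 2).sub
            continuous_const).abs.continuousAt)
      have hlim : Tendsto (fun ε => ((g ε)^2 + |(-1 + h0 * ε)^2 - 1|) / (2 * h0))
          (𝓝[>] 0) (𝓝 0) := by
        have h1 : Tendsto (fun ε => ((g ε)^2 + |(-1 + h0 * ε)^2 - 1|) / (2 * h0)) (𝓝[>] (0:ℝ))
            (𝓝 (((g 0)^2 + |(-1 + h0 * 0)^2 - 1|) / (2 * h0))) :=
          hcont2.tendsto.mono_left nhdsWithin_le_nhds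
        have h2 : ((g 0)^2 + |(-1 + h0 * 0)^2 - 1|) / (2 * h0) = 0 := by
          norm_num [hg0]
        rwa [h2] at h1
      apply squeeze_zero_norm' _ hlim
      filter_upwards [Ioc_mem_nhdsGT one_pos] with ε hε
      have hψε := hψpos ε hε.1.le
      have hψε1 := hψle ε hε.1.le
      have hFval : F ε = ((g ε)^2 - ((-1 + h0 * ε)^2 - 1) * (ψ ε)^2) / (2 * h0) := rfl
      rw [hFval, Real.norm_eq_abs, abs_div, abs_of_pos (by positivity : (0:ℝ) < 2 * h0)]
      gcongr
      calc |(g ε)^2 - ((-1 + h0 * ε)^2 - 1) * (ψ ε)^2|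
          ≤ |(g ε)^2| + |((-1 + h0 * ε)^2 - 1) * (ψ ε)^2| := abs_sub _ _
        _ ≤ (g ε)^2 + |(-1 + h0 * ε)^2 - 1| := by
            rw [abs_of_nonneg (sq_nonneg (g ε)), abs_mul, abs_of_nonneg (sq_nonneg (ψ ε))]
            have : (ψ ε)^2 ≤ 1 := by nlinarith
            nlinarith [abs_nonneg ((-1 + h0 * ε)^2 - 1)]
    have hIoc0 : Tendsto (fun ε => ∫ s in Ioc (0:ℝ) ε, (ψ s)^2 * (-1 + h0 * s))
        (𝓝[>] 0) (𝓝 0) := by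
      have hlin : Tendsto (fun ε : ℝ => (1 + h0) * ε) (𝓝[>] 0) (𝓝 0) := by
        have hco : Continuous (fun ε : ℝ => (1 + h0) * ε) := continuous_const.mul continuous_id
        have h1 : Tendsto (fun ε : ℝ => (1 + h0) * ε) (𝓝[>] (0:ℝ)) (𝓝 ((1 + h0) * 0)) :=
          (hco.tendsto (0:ℝ)).mono_left nhdsWithin_le_nhds
        simpa using h1
      apply squeeze_zero_norm' _ hlin
      filter_upwards [Ioc_mem_nhdsGT one_pos] with ε hε
      have hb : ∀ x ∈ Ioc (0:ℝ) ε, ‖(ψ x)^2 * (-1 + h0 * x)‖ ≤ 1 + h0 := by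
        intro x hx
        have hx0 : 0 < x := hx.1
        have hxε : x ≤ 1 := hx.2.trans hε.2
        have hψx := hψpos x hx0.le
        have hψx1 := hψle x hx0.le
        rw [Real.norm_eq_abs, abs_mul, abs_of_nonneg (sq_nonneg _)]
        have h1 : (ψ x)^2 ≤ 1 := by nlinarith
        have h2 : |(-1 + h0 * x)| ≤ 1 + h0 := by
          rw [abs_le]
          constructor <;> nlinarith
        nlinarith [abs_nonneg (-1 + h0 * x), sq_nonneg (ψ x)]
      have hmeas : AEStronglyMeasurable (fun s => (ψ s)^2 * (-1 + h0 * s))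
          (volume.restrict (Ioc (0:ℝ) ε)) :=
        ((hfint 0 le_rfl).mono_set Ioc_subset_Ioi_self).aestronglyMeasurable
      have := norm_setIntegral_le_of_norm_le_const (C := 1 + h0)
        (by simp [Real.volume_Ioc] : volume (Ioc (0:ℝ) ε) < ⊤) hb
      calc ‖∫ s in Ioc (0:ℝ) ε, (ψ s)^2 * (-1 + h0 * s)‖
          ≤ (1 + h0) * (volume (Ioc (0:ℝ) ε)).toReal := this
        _ = (1 + h0) * ε := by
            rw [Real.volume_Ioc]
            norm_num [ENNReal.toReal_ofReal hε.1.le]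
    have hsum : Tendsto (fun ε => (∫ s in Ioc (0:ℝ) ε, (ψ s)^2 * (-1 + h0 * s)) + F ε)
        (𝓝[>] 0) (𝓝 0) := by
      simpa using hIoc0.add hF0
    have hconst : Tendsto (fun _ : ℝ => ∫ s in Ioi (0:ℝ), (ψ s)^2 * (-1 + h0 * s))
        (𝓝[>] 0) (𝓝 (∫ s in Ioi (0:ℝ), (ψ s)^2 * (-1 + h0 * s))) := tendsto_const_nhds
    have heq : ∀ᶠ ε in 𝓝[>] (0:ℝ),
        (∫ s in Ioi (0:ℝ), (ψ s)^2 * (-1 + h0 * s))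
          = (∫ s in Ioc (0:ℝ) ε, (ψ s)^2 * (-1 + h0 * s)) + F ε := by
      filter_upwards [self_mem_nhdsWithin] with ε hε using hsplit ε hε
    have := tendsto_nhds_unique (hconst.congr' heq) hsum
    simpa using this
  · -- case t > 0
    have hψt := hψpos t htpos.le
    have hr : HasDerivAt (fun u => g u / ψ u)
        ((((-1 + h0 * t)^2 - 1) * ψ t * ψ t - g t * g t) / (ψ t)^2) t :=
      (hg' t htpos.le).div (hψd t htpos) (ne_of_gt hψt)
    rw [hkey t htpos, hr.deriv]
    have hFval : F t = ((g t)^2 - ((-1 + h0 * t)^2 - 1) * (ψ t)^2) / (2 * h0) := rfl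
    rw [hFval]
    have hψne : ψ t ≠ 0 := ne_of_gt hψt
    field_simp
    ring
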